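/- With c ≠ x y x and θ the run-replacement bijection, for every composition a the maximum run length R(a) of c in a equals the maximum k such that the run part k̄ appears in θ(a) (with both defined as 0 when c does not occur in a). -/

import Mathlib

/-- The size of a part in the extended alphabet `ℕ ⊕ ℕ`: `Sum.inl p` is an
ordinary part of size `p`, and `Sum.inr k` is the run part `k̄` of size
`k * |c|`. -/
def runPartSize (c : List ℕ) : ℕ ⊕ ℕ → ℕ
  | Sum.inl p => p
  | Sum.inr k => k * c.sum

/-- The run-replacement map `θ`: each maximal run of `k` consecutive copies of
`c` in `a` is replaced by the single run part `k̄ = Sum.inr k`; all other parts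
`p` become ordinary parts `Sum.inl p`. -/
def theta (c : List ℕ) (a : List ℕ) : List (ℕ ⊕ ℕ) :=
  if hc : c = [] then a.map Sum.inl
  else
    match a with
    | [] => []
    | p :: rest =>
      if c <+: (p :: rest) then
        match theta c ((p :: rest).drop c.length) with
        | Sum.inr k :: t => Sum.inr (k + 1) :: t
        | t => Sum.inr 1 :: t
      else Sum.inl p :: theta c rest
termination_by a.length
decreasing_by
  · simp only [List.length_drop, List.length_cons]
    have : 0 < c.length := by cases c <;> simp_all
    omega
  · simp


def thetaBump : List (ℕ ⊕ ℕ) → List (ℕ ⊕ ℕ)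
  | Sum.inr k :: t => Sum.inr (k + 1) :: t
  | t => Sum.inr 1 :: t

/-- A nonempty proper border of `c` yields a decomposition `c = x ++ y ++ x`. -/
lemma border_xyx (c : List ℕ) :
    ∀ L, 0 < L → L < c.length → (∀ j, j < L → getElem? c j = getElem? c (j + (c.length - L))) →
      ∃ x y : List ℕ, x ≠ [] ∧ c = x ++ y ++ x := by
  intro L
  induction L using Nat.strong_induction_on with
  | _ L ih =>
    intro hL hLc hb
    by_cases h2 : 2 * L ≤ c.length
    · refine ⟨c.take L, (c.drop L).take (c.length - 2 * L), ?_, ?_⟩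
      · have hlen : (c.take L).length = L := by
          rw [List.length_take]; omega
        intro h; rw [h] at hlen; simp at hlen; omega
      · have hdt : c.drop (c.length - L) = c.take L := by
          apply List.ext_getElem?
          intro j
          rw [List.getElem?_drop, List.getElem?_take]
          by_cases hj : j < L
          · rw [if_pos hj, Nat.add_comm, hb j hj]
          · rw [if_neg hj]
            apply List.getElem?_eq_none
            omega
        have h3 : c.take (c.length - L) = c.take L ++ (c.drop L).take (c.length - 2 * L) := by
          have he : c.length - L = L + (c.length - 2 * L) := by omega
          rw [he, List.take_add]
        calc c = c.take (c.length - L) ++ c.drop (c.length - L) := by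
                rw [List.take_append_drop]
          _ = (c.take L ++ (c.drop L).take (c.length - 2 * L)) ++ c.take L := by
                rw [h3, hdt]
          _ = c.take L ++ (c.drop L).take (c.length - 2 * L) ++ c.take L := by
                simp [List.append_assoc]
    · apply ih (2 * L - c.length) (by omega) (by omega) (by omega)
      intro j hj
      have e1 := hb j (by omega)
      have e2 := hb (j + (c.length - L)) (by omega)
      rw [e1, e2]
      congr 1
      omega

/-- Two overlapping occurrences of `c` contradict `hxyx`. -/
lemma no_overlap (c : List ℕ)
    (hxyx : ¬ ∃ x y : List ℕ, x ≠ [] ∧ c = x ++ y ++ x) (a : List ℕ)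
    (h0 : c <+: a) (i : ℕ) (hi : 0 < i) (hic : i < c.length) (h1 : c <+: a.drop i) :
    False := by
  apply hxyx
  apply border_xyx c (c.length - i) (by omega) (by omega)
  intro j hj
  have hci : c.length - (c.length - i) = i := by omega
  rw [hci]
  obtain ⟨t0, h0⟩ := h0
  obtain ⟨t1, h1⟩ := h1
  have e1 : getElem? c (j + i) = getElem? a (j + i) := by
    rw [← h0, List.getElem?_append_left (by omega)]
  have e2 : getElem? a (j + i) = getElem? (a.drop i) j := by
    rw [List.getElem?_drop]; congr 1; omega
  have e3 : getElem? (a.drop i) j = getElem? c j := by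
    rw [← h1, List.getElem?_append_left (by omega)]
  rw [e1, e2, e3]

lemma thetaBump_mem (l : List (ℕ ⊕ ℕ)) (M : ℕ) (h : Sum.inr M ∈ l) :
    ∃ M', M ≤ M' ∧ Sum.inr M' ∈ thetaBump l := by
  match l with
  | [] => simp at h
  | Sum.inl q :: t => exact ⟨M, le_refl M, by simpa [thetaBump] using Or.inr h⟩
  | Sum.inr m :: t =>
    rcases List.mem_cons.mp h with h | h
    · refine ⟨m + 1, ?_, by simp [thetaBump]⟩
      have : M = m := by simpa using h
      omega
    · exact ⟨M, le_refl M, by simp [thetaBump, h]⟩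

lemma theta_nil (c : List ℕ) : theta c [] = [] := by
  rw [theta]; split <;> simp

lemma theta_cons_neg (c : List ℕ) (hc : c ≠ []) (p : ℕ) (rest : List ℕ)
    (h : ¬ c <+: (p :: rest)) : theta c (p :: rest) = Sum.inl p :: theta c rest := by
  rw [theta]; simp [hc, h]

lemma theta_cons_pos (c : List ℕ) (hc : c ≠ []) (p : ℕ) (rest : List ℕ)
    (h : c <+: (p :: rest)) :
    theta c (p :: rest) = thetaBump (theta c ((p :: rest).drop c.length)) := by
  rw [theta]
  simp only [hc, h, dite_false, if_true, dif_neg]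
  rfl

lemma flatten_replicate_succ (k : ℕ) (c : List ℕ) :
    (List.replicate (k + 1) c).flatten = c ++ (List.replicate k c).flatten := by
  simp [List.replicate_succ]

lemma flatten_replicate_length (k : ℕ) (c : List ℕ) :
    (List.replicate k c).flatten.length = k * c.length := by
  simp [List.length_flatten, List.map_replicate, List.sum_replicate, smul_eq_mul]

/-- If `theta c a` begins with run part `k̄` then `c^k` is a prefix of `a`. -/
lemma prefix_of_theta_head (c : List ℕ) (hc : c ≠ []) :
    ∀ n a, a.length ≤ n → ∀ k t, theta c a = Sum.inr k :: t →
      (List.replicate k c).flatten <+: a := by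
  intro n
  induction n with
  | zero =>
    intro a ha k t h
    have : a = [] := List.length_eq_zero_iff.mp (Nat.le_zero.mp ha)
    subst this; rw [theta_nil] at h; cases h
  | succ n ih =>
    rintro (_ | ⟨p, rest⟩) ha k t h
    · rw [theta_nil] at h; cases h
    · by_cases hpre : c <+: (p :: rest)
      · rw [theta_cons_pos c hc p rest hpre] at h
        obtain ⟨d, hd⟩ := hpre
        have hdrop : (p :: rest).drop c.length = d := by rw [← hd, List.drop_left]
        have hclen : 0 < c.length := List.length_pos_iff.mpr hc
        have hlen : c.length + d.length = rest.length + 1 := by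
          have := congrArg List.length hd
          simpa using this
        have hdlen : d.length ≤ n := by
          simp only [List.length_cons] at ha; omega
        rw [hdrop] at h
        rcases hth : theta c d with _ | ⟨(q | m), t'⟩ <;> rw [hth] at h <;>
            simp only [thetaBump] at h <;> cases h
        · simpa [flatten_replicate_succ] using ⟨d, hd⟩
        · simpa [flatten_replicate_succ] using ⟨d, hd⟩
        · have hpd : (List.replicate m c).flatten <+: d := ih d hdlen m t hth
          rw [flatten_replicate_succ, ← hd]
          exact (List.prefix_append_right_inj c).mpr hpd
      · rw [theta_cons_neg c hc p rest hpre] at h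
        cases h

/-- Soundness: every run part in `theta c a` corresponds to a run in `a`. -/
lemma infix_of_mem_theta (c : List ℕ) (hc : c ≠ []) :
    ∀ n a, a.length ≤ n → ∀ k, Sum.inr k ∈ theta c a →
      (List.replicate k c).flatten <:+: a := by
  intro n
  induction n with
  | zero =>
    intro a ha k h
    have : a = [] := List.length_eq_zero_iff.mp (Nat.le_zero.mp ha)
    subst this; rw [theta_nil] at h; simp at h
  | succ n ih =>
    rintro (_ | ⟨p, rest⟩) ha k h
    · rw [theta_nil] at h; simp at h
    · by_cases hpre : c <+: (p :: rest)
      · rw [theta_cons_pos c hc p rest hpre] at h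
        obtain ⟨d, hd⟩ := hpre
        have hdrop : (p :: rest).drop c.length = d := by rw [← hd, List.drop_left]
        have hclen : 0 < c.length := List.length_pos_iff.mpr hc
        have hlen : c.length + d.length = rest.length + 1 := by
          have := congrArg List.length hd
          simpa using this
        have hdlen : d.length ≤ n := by
          simp only [List.length_cons] at ha; omega
        have hsuf : d <:+ (p :: rest) := ⟨c, hd⟩
        rw [hdrop] at h
        rcases hth : theta c d with _ | ⟨(q | m), t'⟩ <;> rw [hth] at h <;>
            simp only [thetaBump, List.mem_cons] at h
        · rcases h with h | h
          · cases h
            refine List.IsPrefix.isInfix ?_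
            simpa [flatten_replicate_succ] using ⟨d, hd⟩
          · simp at h
        · rcases h with h | h
          · cases h
            refine List.IsPrefix.isInfix ?_
            simpa [flatten_replicate_succ] using ⟨d, hd⟩
          · have : Sum.inr k ∈ theta c d := by rw [hth]; exact List.mem_cons.mpr h
            exact (ih d hdlen k this).trans hsuf.isInfix
        · rcases h with h | h
          · cases h
            refine List.IsPrefix.isInfix ?_
            have hpd : (List.replicate m c).flatten <+: d :=
              prefix_of_theta_head c hc n d hdlen m t' hth
            rw [flatten_replicate_succ, ← hd]
            exact (List.prefix_append_right_inj c).mpr hpd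
          · have : Sum.inr k ∈ theta c d := by rw [hth]; simp [h]
            exact (ih d hdlen k this).trans hsuf.isInfix
      · rw [theta_cons_neg c hc p rest hpre] at h
        simp only [List.mem_cons] at h
        rcases h with h | h
        · cases h
        · have hr : rest.length ≤ n := by
            simp only [List.length_cons] at ha; omega
          exact (ih rest hr k h).trans (List.suffix_cons p rest).isInfix

/-- If `c^k` is a prefix of `a` (`k ≥ 1`), `theta c a` starts with a run part `M ≥ k`. -/
lemma theta_head_of_prefix (c : List ℕ) (hc : c ≠ []) :
    ∀ n a, a.length ≤ n → ∀ k, 1 ≤ k → (List.replicate k c).flatten <+: a →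
      ∃ M t, k ≤ M ∧ theta c a = Sum.inr M :: t := by
  intro n
  induction n with
  | zero =>
    intro a ha k hk hp
    have ha0 : a = [] := List.length_eq_zero_iff.mp (Nat.le_zero.mp ha)
    subst ha0
    have := hp.length_le
    rw [flatten_replicate_length] at this
    have hclen : 0 < c.length := List.length_pos_iff.mpr hc
    have hpos : 0 < k * c.length := Nat.mul_pos (by omega) hclen
    simp only [List.length_nil] at this
    omega
  | succ n ih =>
    intro a ha k hk hp
    have hclen : 0 < c.length := List.length_pos_iff.mpr hc
    have hcpre : c <+: a := by
      have h1 : c <+: (List.replicate k c).flatten := by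
        obtain ⟨k', rfl⟩ : ∃ k', k = k' + 1 := ⟨k - 1, by omega⟩
        rw [flatten_replicate_succ]
        exact List.prefix_append c _
      exact h1.trans hp
    match a with
    | [] =>
      have := hcpre.length_le
      simp only [List.length_nil] at this
      omega
    | p :: rest =>
      rw [theta_cons_pos c hc p rest hcpre]
      obtain ⟨d, hd⟩ := hcpre
      have hdrop : (p :: rest).drop c.length = d := by rw [← hd, List.drop_left]
      have hlen : c.length + d.length = rest.length + 1 := by
        have := congrArg List.length hd
        simpa using this
      have hdlen : d.length ≤ n := by
        simp only [List.length_cons] at ha; omega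
      rw [hdrop]
      by_cases hk1 : k = 1
      · subst hk1
        rcases hth : theta c d with _ | ⟨(q | m), t'⟩ <;>
            simp only [thetaBump]
        · exact ⟨1, [], le_refl 1, rfl⟩
        · exact ⟨1, _, le_refl 1, rfl⟩
        · exact ⟨m + 1, t', by omega, rfl⟩
      · have hk2 : 1 ≤ k - 1 := by omega
        have hp' : (List.replicate (k - 1) c).flatten <+: d := by
          have : (List.replicate k c).flatten = c ++ (List.replicate (k - 1) c).flatten := by
            obtain ⟨k', rfl⟩ : ∃ k', k = k' + 1 := ⟨k - 1, by omega⟩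
            simpa using flatten_replicate_succ k' c
          rw [this, ← hd] at hp
          exact (List.prefix_append_right_inj c).mp hp
        obtain ⟨M, t, hM, hth⟩ := ih d hdlen (k - 1) hk2 hp'
        rw [hth]
        simp only [thetaBump]
        exact ⟨M + 1, t, by omega, rfl⟩

/-- Completeness: a run of `k ≥ 1` copies of `c` in `a` yields a run part `M ≥ k`. -/
lemma mem_theta_of_infix (c : List ℕ) (hc : c ≠ [])
    (hxyx : ¬ ∃ x y : List ℕ, x ≠ [] ∧ c = x ++ y ++ x) :
    ∀ n a, a.length ≤ n → ∀ k, 1 ≤ k → (List.replicate k c).flatten <:+: a →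
      ∃ M, k ≤ M ∧ Sum.inr M ∈ theta c a := by
  intro n
  induction n with
  | zero =>
    intro a ha k hk hinf
    have ha0 : a = [] := List.length_eq_zero_iff.mp (Nat.le_zero.mp ha)
    subst ha0
    have := hinf.length_le
    rw [flatten_replicate_length] at this
    have hclen : 0 < c.length := List.length_pos_iff.mpr hc
    have hpos : 0 < k * c.length := Nat.mul_pos (by omega) hclen
    simp only [List.length_nil] at this
    omega
  | succ n ih =>
    intro a ha k hk hinf
    have hclen : 0 < c.length := List.length_pos_iff.mpr hc
    obtain ⟨s, t, hst⟩ := hinf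
    have hpre_drop : (List.replicate k c).flatten <+: a.drop s.length := by
      rw [← hst, List.append_assoc, List.drop_left]
      exact List.prefix_append _ t
    rcases Nat.eq_zero_or_pos s.length with hs0 | hs0
    · -- prefix case
      have hp : (List.replicate k c).flatten <+: a := by
        rwa [hs0, List.drop_zero] at hpre_drop
      obtain ⟨M, t', hM, hth⟩ := theta_head_of_prefix c hc (n + 1) a ha k hk hp
      exact ⟨M, hM, by rw [hth]; simp⟩
    · -- the run starts at position s.length ≥ 1
      have hcs : c <+: a.drop s.length := by
        have h1 : c <+: (List.replicate k c).flatten := by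
          obtain ⟨k', rfl⟩ : ∃ k', k = k' + 1 := ⟨k - 1, by omega⟩
          rw [flatten_replicate_succ]
          exact List.prefix_append c _
        exact h1.trans hpre_drop
      match a with
      | [] =>
        have := hpre_drop.length_le
        rw [flatten_replicate_length] at this
        have hpos : 0 < k * c.length := Nat.mul_pos (by omega) hclen
        simp only [List.drop_nil, List.length_nil] at this
        omega
      | p :: rest =>
        by_cases hcpre : c <+: (p :: rest)
        · -- run branch: show s.length ≥ c.length using non-overlap
          have hge : c.length ≤ s.length := by
            by_contra hlt
            exact no_overlap c hxyx (p :: rest) hcpre s.length hs0 (by omega) hcs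
          rw [theta_cons_pos c hc p rest hcpre]
          obtain ⟨d, hd⟩ := hcpre
          have hdrop : (p :: rest).drop c.length = d := by rw [← hd, List.drop_left]
          have hlen : c.length + d.length = rest.length + 1 := by
            have := congrArg List.length hd
            simpa using this
          have hdlen : d.length ≤ n := by
            simp only [List.length_cons] at ha; omega
          have hinfd : (List.replicate k c).flatten <:+: d := by
            have h1 : (p :: rest).drop s.length = d.drop (s.length - c.length) := by
              rw [← hd]
              rw [List.drop_append]
              have : c.length - s.length = 0 := by omega
              simp [this]
              omega
            rw [h1] at hpre_drop
            exact hpre_drop.isInfix.trans (List.drop_suffix _ d).isInfix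
          obtain ⟨M, hM, hmem⟩ := ih d hdlen k hk hinfd
          rw [hdrop]
          obtain ⟨M', hM', hmem'⟩ := thetaBump_mem (theta c d) M hmem
          exact ⟨M', by omega, hmem'⟩
        · -- ordinary branch
          rw [theta_cons_neg c hc p rest hcpre]
          have hinfr : (List.replicate k c).flatten <:+: rest := by
            have h1 : (p :: rest).drop s.length = rest.drop (s.length - 1) := by
              obtain ⟨m, hm⟩ : ∃ m, s.length = m + 1 := ⟨s.length - 1, by omega⟩
              rw [hm]
              simp
            rw [h1] at hpre_drop
            exact hpre_drop.isInfix.trans (List.drop_suffix _ rest).isInfix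
          have hr : rest.length ≤ n := by
            simp only [List.length_cons] at ha; omega
          obtain ⟨M, hM, hmem⟩ := ih rest hr k hk hinfr
          exact ⟨M, hM, by simp [hmem]⟩

/-- The maximum run length `R(a)` of `c` in `a` (the largest `k` such that `k`
consecutive copies of `c` occur as a block in `a`) equals the maximum `k` such
that the run part `k̄` appears in `θ(a)`; both are `0` when `c` does not occur
in `a`. -/
theorem max_run_eq_max_run_part (c : List ℕ) (hc : c ≠ []) (hpos : ∀ p ∈ c, 0 < p)
    (hxyx : ¬ ∃ x y : List ℕ, x ≠ [] ∧ c = x ++ y ++ x) (a : List ℕ) :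
    sSup {k : ℕ | (List.replicate k c).flatten <:+: a}
      = sSup {k : ℕ | Sum.inr k ∈ theta c a} := by
  have hclen : 0 < c.length := List.length_pos_iff.mpr hc
  set S1 := {k : ℕ | (List.replicate k c).flatten <:+: a} with hS1
  set S2 := {k : ℕ | Sum.inr k ∈ theta c a} with hS2
  have hmemS1 : ∀ k ∈ S1, k ≤ a.length := by
    intro k hk
    have hk' : (List.replicate k c).flatten <:+: a := hk
    have h1 := hk'.length_le
    rw [flatten_replicate_length] at h1
    calc k = k * 1 := (Nat.mul_one k).symm
      _ ≤ k * c.length := Nat.mul_le_mul_left k hclen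
      _ ≤ a.length := h1
  have bdd1 : BddAbove S1 := ⟨a.length, hmemS1⟩
  have h21 : ∀ k ∈ S2, k ∈ S1 := by
    intro k hk
    exact infix_of_mem_theta c hc a.length a le_rfl k hk
  have bdd2 : BddAbove S2 := ⟨a.length, fun k hk => hmemS1 k (h21 k hk)⟩
  have h0 : (0 : ℕ) ∈ S1 := by
    simp only [hS1, Set.mem_setOf_eq, List.replicate_zero, List.flatten_nil]
    exact List.nil_infix
  apply le_antisymm
  · have hK : sSup S1 ∈ S1 := Nat.sSup_mem ⟨0, h0⟩ bdd1
    rcases Nat.eq_zero_or_pos (sSup S1) with h | h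
    · rw [h]; exact Nat.zero_le _
    · obtain ⟨M, hM, hmem⟩ :=
        mem_theta_of_infix c hc hxyx a.length a le_rfl (sSup S1) h hK
      exact le_trans hM (le_csSup bdd2 hmem)
  · by_cases hne : S2.Nonempty
    · have hK : sSup S2 ∈ S2 := Nat.sSup_mem hne bdd2
      exact le_csSup bdd1 (h21 _ hK)
    · rw [Set.not_nonempty_iff_eq_empty.mp hne, csSup_empty]
      exact Nat.zero_le _
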